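/- Let γ > 2, ν ∈ (−1, 1), t ≥ 0, and let F : (0,∞) → [0,∞) be measurable. For τ ≥ 0 define u(x, τ) = (1/Γ(1 − 2/γ)) e^{−τ} x^{−1/γ} ∫₀^1 e^{−x w (1 − e^{−γτ})} F(e^{−γτ} x w) w^{1/γ} (1−w)^{−2/γ} dw. Then ∫₀^∞ x^{(2+2ν)/γ − 1} u(x, t)² dx ≤ e^{−2(1−ν) t} ∫₀^∞ x^{(2+2ν)/γ − 1} u(x, 0)² dx (both sides taken in [0,∞]). -/

import Mathlib

open MeasureTheory Set ENNReal

/-- Scaling change of variables for lintegrals over `Ioi 0`. -/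
lemma lintegral_Ioi_comp_mul_left (G : ℝ → ℝ≥0∞) {c : ℝ} (hc : 0 < c) :
    ∫⁻ x in Ioi (0:ℝ), G (c * x) = ENNReal.ofReal c⁻¹ * ∫⁻ y in Ioi (0:ℝ), G y := by
  have hpre : (c * ·) ⁻¹' (Ioi (0:ℝ)) = Ioi (0:ℝ) := by
    ext x
    simp only [mem_preimage, mem_Ioi]
    constructor
    · intro h; nlinarith
    · intro h; exact mul_pos hc h
  have hmap : Measure.map (c * ·) (volume.restrict (Ioi (0:ℝ)))
      = ENNReal.ofReal c⁻¹ • (volume.restrict (Ioi (0:ℝ))) := by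
    rw [← hpre, ← Measure.restrict_map (measurable_const_mul c) measurableSet_Ioi,
      Real.map_volume_mul_left hc.ne', Measure.restrict_smul,
      abs_of_pos (inv_pos.mpr hc), hpre]
  calc ∫⁻ x in Ioi (0:ℝ), G (c * x)
      = ∫⁻ y, G y ∂(Measure.map (MeasurableEquiv.mulLeft₀ c hc.ne')
          (volume.restrict (Ioi (0:ℝ)))) := by
        rw [lintegral_map_equiv G (MeasurableEquiv.mulLeft₀ c hc.ne')]
        simp [MeasurableEquiv.coe_mulLeft₀ hc.ne']
    _ = ENNReal.ofReal c⁻¹ * ∫⁻ y in Ioi (0:ℝ), G y := by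
        rw [show ⇑(MeasurableEquiv.mulLeft₀ c hc.ne') = (c * ·) from
          MeasurableEquiv.coe_mulLeft₀ hc.ne', hmap, lintegral_smul_measure, smul_eq_mul]

/-- Sharp weighted-`L²` decay of the explicit representation of the fragmentation
semigroup along the continuous spectrum:
`∫₀^∞ x^{(2+2ν)/γ−1} u(x,t)² dx ≤ e^{−2(1−ν)t} ∫₀^∞ x^{(2+2ν)/γ−1} u(x,0)² dx`. -/
theorem continuous_spectrum_weighted_decay (γ : ℝ) (hγ : 2 < γ)
    (ν : ℝ) (hν : ν ∈ Ioo (-1:ℝ) 1) (t : ℝ) (ht : 0 ≤ t)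
    (F : ℝ → ℝ) (hF : Measurable F) (hFnonneg : ∀ x : ℝ, 0 ≤ F x)
    (u : ℝ → ℝ → ℝ≥0∞)
    (hu : ∀ x τ : ℝ, u x τ =
      ENNReal.ofReal ((1 / Real.Gamma (1 - 2/γ)) * Real.exp (-τ) * x ^ (-(1/γ))) *
        ∫⁻ w in Ioo (0:ℝ) 1,
          ENNReal.ofReal (Real.exp (-(x * w * (1 - Real.exp (-(γ * τ))))) *
            F (Real.exp (-(γ * τ)) * x * w) * w ^ (1/γ) * (1 - w) ^ (-(2/γ)))) :
    ∫⁻ x in Ioi (0:ℝ), ENNReal.ofReal (x ^ ((2 + 2*ν)/γ - 1)) * (u x t) ^ 2 ≤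
      ENNReal.ofReal (Real.exp (-2 * (1 - ν) * t)) *
        ∫⁻ x in Ioi (0:ℝ), ENNReal.ofReal (x ^ ((2 + 2*ν)/γ - 1)) * (u x 0) ^ 2 := by
  have hγ0 : (0:ℝ) < γ := by linarith
  set c : ℝ := Real.exp (-(γ * t)) with hcdef
  have hc : 0 < c := Real.exp_pos _
  set C : ℝ := 1 / Real.Gamma (1 - 2/γ) with hCdef
  -- the key pointwise bound:  u x t ≤ e^{-2t} u (c x) 0
  have key : ∀ x : ℝ, 0 < x → u x t ≤ ENNReal.ofReal (Real.exp (-2*t)) * u (c*x) 0 := by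
    intro x hx
    rw [hu x t, hu (c*x) 0]
    simp only [mul_zero, neg_zero, Real.exp_zero, one_mul, sub_self, mul_one]
    have hcx : (c*x) ^ (-(1/γ)) = Real.exp t * x ^ (-(1/γ)) := by
      rw [Real.mul_rpow hc.le hx.le, hcdef, ← Real.exp_mul]
      congr 2
      field_simp
    have hexp : Real.exp (-t) = Real.exp (-2*t) * Real.exp t := by
      rw [← Real.exp_add]; ring_nf
    have hB : C * Real.exp (-t) * x ^ (-(1/γ))
        = Real.exp (-2*t) * (C * (c*x) ^ (-(1/γ))) := by
      rw [hcx, hexp]; ring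
    rw [hB, ENNReal.ofReal_mul (Real.exp_nonneg _), mul_assoc]
    refine mul_le_mul_right (mul_le_mul_right ?_ _) _
    refine setLIntegral_mono' measurableSet_Ioo (fun w hw => ?_)
    obtain ⟨hw0, hw1⟩ := hw
    apply ENNReal.ofReal_le_ofReal
    have harg : Real.exp (-(γ*t)) * x * w = c * x * w := by rw [hcdef]
    rw [harg]
    have hP : 0 ≤ F (c * x * w) * w ^ (1/γ) * (1 - w) ^ (-(2/γ)) := by
      have := hFnonneg (c * x * w)
      have h1 : (0:ℝ) ≤ w ^ (1/γ) := Real.rpow_nonneg hw0.le _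
      have h2 : (0:ℝ) ≤ (1 - w) ^ (-(2/γ)) := Real.rpow_nonneg (by linarith) _
      positivity
    calc Real.exp (-(x * w * (1 - Real.exp (-(γ * t))))) *
          F (c * x * w) * w ^ (1/γ) * (1 - w) ^ (-(2/γ))
        = Real.exp (-(x * w * (1 - Real.exp (-(γ * t))))) *
            (F (c * x * w) * w ^ (1/γ) * (1 - w) ^ (-(2/γ))) := by ring
      _ ≤ 1 * (F (c * x * w) * w ^ (1/γ) * (1 - w) ^ (-(2/γ))) := by
          apply mul_le_mul_of_nonneg_right _ hP
          rw [Real.exp_le_one_iff]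
          have hone : Real.exp (-(γ*t)) ≤ 1 := by
            rw [Real.exp_le_one_iff]
            nlinarith
          exact neg_nonpos.mpr (mul_nonneg (mul_pos hx hw0).le (by linarith))
      _ = F (c * x * w) * w ^ (1/γ) * (1 - w) ^ (-(2/γ)) := one_mul _
  set β : ℝ := (2 + 2*ν)/γ - 1 with hβ
  set G : ℝ → ℝ≥0∞ := fun y => ENNReal.ofReal (y ^ β) * (u y 0) ^ 2 with hG
  set K : ℝ≥0∞ := ENNReal.ofReal (c ^ (-β) * Real.exp (-2*t) ^ 2) with hK
  have hscale : ∀ x ∈ Ioi (0:ℝ),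
      ENNReal.ofReal (x ^ β) * (ENNReal.ofReal (Real.exp (-2*t)) * u (c*x) 0) ^ 2
        = K * G (c*x) := by
    intro x hx
    have hx0 : (0:ℝ) < x := hx
    have hxβ : x ^ β = c ^ (-β) * (c*x) ^ β := by
      rw [Real.mul_rpow hc.le hx0.le, Real.rpow_neg hc.le, inv_mul_cancel_left₀]
      exact (Real.rpow_pos_of_pos hc _).ne'
    rw [hxβ, hG, hK]
    rw [ENNReal.ofReal_mul (Real.rpow_nonneg hc.le _),
      ENNReal.ofReal_mul (Real.rpow_nonneg hc.le _),
      mul_pow, ← ENNReal.ofReal_pow (Real.exp_nonneg _)]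
    ring
  calc ∫⁻ x in Ioi (0:ℝ), ENNReal.ofReal (x ^ β) * (u x t) ^ 2
      ≤ ∫⁻ x in Ioi (0:ℝ),
          ENNReal.ofReal (x ^ β) * (ENNReal.ofReal (Real.exp (-2*t)) * u (c*x) 0) ^ 2 := by
        refine setLIntegral_mono' measurableSet_Ioi (fun x hx => ?_)
        gcongr
        exact key x hx
    _ = ∫⁻ x in Ioi (0:ℝ), K * G (c*x) :=
        setLIntegral_congr_fun measurableSet_Ioi hscale
    _ = K * ∫⁻ x in Ioi (0:ℝ), G (c*x) :=
        lintegral_const_mul' K _ ENNReal.ofReal_ne_top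
    _ = K * (ENNReal.ofReal c⁻¹ * ∫⁻ y in Ioi (0:ℝ), G y) := by
        rw [lintegral_Ioi_comp_mul_left G hc]
    _ = ENNReal.ofReal (Real.exp (-2 * (1 - ν) * t)) * ∫⁻ y in Ioi (0:ℝ), G y := by
        rw [← mul_assoc, hK, ← ENNReal.ofReal_mul (by positivity)]
        congr 2
        have h1 : c ^ (-β) = Real.exp (γ * t * β) := by
          rw [hcdef, ← Real.exp_mul]; ring_nf
        have h2 : c⁻¹ = Real.exp (γ * t) := by
          rw [hcdef, ← Real.exp_neg]; ring_nf
        have h3 : Real.exp (-2*t) ^ 2 = Real.exp (-4*t) := by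
          rw [sq, ← Real.exp_add]; ring_nf
        rw [h1, h2, h3, ← Real.exp_add, ← Real.exp_add]
        congr 1
        rw [hβ]
        field_simp
        ring
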